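/- arXiv:2011.11089 — 2 statements merged into one kernel-verified Lean document; each statement's English description precedes it below -/
import Mathlib

section
/- The viscous coefficient matrix block K₁₁ of the symmetrized 2D compressible Navier-Stokes equations is symmetric positive semi-definite whenever v₄ < 0, μ ≥ 0, λ ≥ 0, γ > 1, Pr > 0. -/
theorem K11_symm_posSemidef (v₂ v₃ v₄ μ lam γ Pr : ℝ)
    (hv₄ : v₄ < 0) (hμ : 0 ≤ μ) (hlam : 0 ≤ lam) (hγ : 1 < γ) (hPr : 0 < Pr) :
    let K₁₁ : Matrix (Fin 4) (Fin 4) ℝ :=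
      (1 / v₄ ^ 3) •
        Matrix.of
          ![![0, 0, 0, 0],
            ![0, -((lam + 2 * μ) * v₄ ^ 2), 0, (lam + 2 * μ) * v₂ * v₄],
            ![0, 0, -(μ * v₄ ^ 2), μ * v₃ * v₄],
            ![0, (lam + 2 * μ) * v₂ * v₄, μ * v₃ * v₄,
              -((lam + 2 * μ) * v₂ ^ 2 + μ * v₃ ^ 2 - γ * μ * v₄ / Pr)]]
    K₁₁.IsSymm ∧ K₁₁.PosSemidef := by
  intro K₁₁
  have hsymm : K₁₁.IsSymm := by
    unfold Matrix.IsSymm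
    ext i j
    fin_cases i <;> fin_cases j <;>
      simp [K₁₁, Matrix.transpose_apply, Matrix.vecHead, Matrix.vecTail]
  refine ⟨hsymm, Matrix.posSemidef_iff_dotProduct_mulVec.2 ⟨hsymm, fun x => ?_⟩⟩
  simp only [K₁₁, Matrix.smul_mulVec, dotProduct, Matrix.mulVec,
    Fin.sum_univ_four, Matrix.smul_apply, Pi.smul_apply, smul_eq_mul,
    Matrix.of_apply, Matrix.cons_val', Matrix.cons_val_zero, Matrix.cons_val_one,
    Matrix.head_cons, Matrix.empty_val', Matrix.cons_val_fin_one, Matrix.head_fin_const,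
    RCLike.star_def, starRingEnd_apply, star_trivial, Pi.star_apply, RCLike.re_to_real,
    Matrix.cons_val_two, Matrix.tail_cons, Matrix.cons_val_three]
  have h3 : v₄ ^ 3 < 0 := by nlinarith [mul_pos (neg_pos.2 hv₄) (neg_pos.2 hv₄)]
  have hc : 0 < -(1 / v₄ ^ 3) := by
    have := div_pos one_pos (neg_pos.2 h3)
    rw [div_neg] at this
    linarith
  have hγ0 : (0:ℝ) ≤ γ := by linarith
  have h4 : 0 ≤ γ * μ * (-v₄) / Pr * x 3 ^ 2 :=
    mul_nonneg (div_nonneg (mul_nonneg (mul_nonneg hγ0 hμ) (by linarith)) hPr.le)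
      (sq_nonneg (x 3))
  have hQ : 0 ≤ -(1 / v₄ ^ 3) *
      (lam * (v₄ * x 1 - v₂ * x 3) ^ 2 + 2 * (μ * (v₄ * x 1 - v₂ * x 3) ^ 2) +
        μ * (v₄ * x 2 - v₃ * x 3) ^ 2 + γ * μ * (-v₄) / Pr * x 3 ^ 2) :=
    mul_nonneg hc.le (by
      have := mul_nonneg hlam (sq_nonneg (v₄ * x 1 - v₂ * x 3))
      have := mul_nonneg hμ (sq_nonneg (v₄ * x 1 - v₂ * x 3))
      have := mul_nonneg hμ (sq_nonneg (v₄ * x 2 - v₃ * x 3))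
      linarith)
  ring_nf at hQ ⊢
  linarith [hQ]
end

section
/- Adiabatic no-slip boundary term cancellation: with exterior states v₂⁺ = -2u₁v₄ - v₂, v₃⁺ = -2u₂v₄ - v₃, v₄⁺ = v₄, σ₂⁺ = σ₂, σ₃⁺ = σ₃, σ₄⁺ = 2(u₁σ₂ + u₂σ₃ + c_v g/v₄) - σ₄, the pointwise boundary flux combination (1/2)(v⁺ - v)·σ n + {σ}n · v equals c_v g, where v = (v₂,v₃,v₄), σ = (σ₂,σ₃,σ₄), n ∈ ℝ is a scalar normal component with n² = 1 (1D interface), u₁,u₂ wall velocities and g the heat entropy flow. -/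
theorem adiabatic_noslip_boundary_term (v₂ v₃ v₄ σ₂ σ₃ σ₄ u₁ u₂ g c_v n : ℝ)
    (hv₄ : v₄ ≠ 0) (hn : n ^ 2 = 1)
    (v₂p v₃p v₄p σ₂p σ₃p σ₄p : ℝ)
    (hv₂p : v₂p = -2 * u₁ * v₄ - v₂)
    (hv₃p : v₃p = -2 * u₂ * v₄ - v₃)
    (hv₄p : v₄p = v₄)
    (hσ₂p : σ₂p = σ₂) (hσ₃p : σ₃p = σ₃)
    (hσ₄p : σ₄p = 2 * (u₁ * σ₂ + u₂ * σ₃ + c_v * g * n / v₄) - σ₄) :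
    (1 / 2) * ((v₂p - v₂) * σ₂ + (v₃p - v₃) * σ₃ + (v₄p - v₄) * σ₄) * n +
      ((σ₂p + σ₂) / 2 * v₂ + (σ₃p + σ₃) / 2 * v₃ + (σ₄p + σ₄) / 2 * v₄) * n
      = c_v * g := by
  subst hv₂p hv₃p hv₄p hσ₂p hσ₃p hσ₄p
  field_simp
  linear_combination (2 * c_v * g) * hn
end
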